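/- Let R > 0 and fix either sign ±. For every f ∈ C^∞([−R,R]) one has the commutator relation D_±(L_± f) − L_±(D_± f) = −D_± f pointwise on [−R,R]; more generally, for every j ∈ ℕ, D_±^j(L_± f) − L_±(D_±^j f) = −j D_±^j f pointwise on [−R,R]. -/

import Mathlib

open Real

/-- The height function `h(y) = √(2 + y²) − 2`. -/
noncomputable def hfun (y : ℝ) : ℝ := Real.sqrt (2 + y ^ 2) - 2

/-- The vector field `D_± f(y) = f'(y)/(1 ± h'(y))`; the sign is encoded by `σ ∈ {1, −1}`. -/
noncomputable def Dop (σ : ℝ) (f : ℝ → ℝ) : ℝ → ℝ :=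
  fun y => deriv f y / (1 + σ * deriv hfun y)

/-- The vector field `L_± f(y) = −((y ± h(y))/(1 ± h'(y))) f'(y)`. -/
noncomputable def Lop (σ : ℝ) (f : ℝ → ℝ) : ℝ → ℝ :=
  fun y => -((y + σ * hfun y) / (1 + σ * deriv hfun y)) * deriv f y

namespace CommAux

lemma sq_pos (y : ℝ) : (0:ℝ) < 2 + y ^ 2 := by positivity

lemma sqrt_pos' (y : ℝ) : 0 < Real.sqrt (2 + y ^ 2) :=
  Real.sqrt_pos.2 (sq_pos y)

lemma abs_lt_sqrt (y : ℝ) : |y| < Real.sqrt (2 + y ^ 2) := by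
  rw [← Real.sqrt_sq_eq_abs]
  exact Real.sqrt_lt_sqrt (sq_nonneg y) (by linarith)

lemma hasDerivAt_hfun (y : ℝ) :
    HasDerivAt hfun (y / Real.sqrt (2 + y ^ 2)) y := by
  have h1 : HasDerivAt (fun y : ℝ => 2 + y ^ 2) (2 * y) y := by
    simpa using ((hasDerivAt_pow 2 y).const_add 2)
  have h2 := (Real.hasDerivAt_sqrt (ne_of_gt (sq_pos y))).comp y h1
  have h3 := h2.sub_const 2
  have hs := (sqrt_pos' y).ne'
  refine h3.congr_deriv ?_
  field_simp

lemma deriv_hfun (y : ℝ) : deriv hfun y = y / Real.sqrt (2 + y ^ 2) :=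
  (hasDerivAt_hfun y).deriv

lemma contDiff_sqrt2 : ContDiff ℝ (⊤ : ℕ∞) (fun y : ℝ => Real.sqrt (2 + y ^ 2)) :=
  (contDiff_const.add (contDiff_id.pow 2)).sqrt (fun y => (sq_pos y).ne')

lemma contDiff_hfun : ContDiff ℝ (⊤ : ℕ∞) hfun :=
  contDiff_sqrt2.sub contDiff_const

lemma contDiff_derivh : ContDiff ℝ (⊤ : ℕ∞) (deriv hfun) := by
  have : deriv hfun = fun y => y / Real.sqrt (2 + y ^ 2) := funext deriv_hfun
  rw [this]
  exact contDiff_id.div contDiff_sqrt2 (fun y => (sqrt_pos' y).ne')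

lemma A_pos {σ : ℝ} (hσ : σ = 1 ∨ σ = -1) (y : ℝ) :
    0 < 1 + σ * deriv hfun y := by
  rw [deriv_hfun]
  have hs := sqrt_pos' y
  have ha := abs_lt_sqrt y
  have h1 : 0 < Real.sqrt (2 + y ^ 2) + σ * y := by
    rcases hσ with h | h <;> subst h <;> cases abs_cases y <;> nlinarith
  have h2 : 1 + σ * (y / Real.sqrt (2 + y ^ 2))
      = (Real.sqrt (2 + y ^ 2) + σ * y) / Real.sqrt (2 + y ^ 2) := by
    field_simp
  rw [h2]
  positivity

lemma contDiff_A (σ : ℝ) : ContDiff ℝ (⊤ : ℕ∞) (fun y => 1 + σ * deriv hfun y) :=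
  contDiff_const.add (contDiff_const.mul contDiff_derivh)

lemma contDiff_B (σ : ℝ) : ContDiff ℝ (⊤ : ℕ∞) (fun y => y + σ * hfun y) :=
  contDiff_id.add (contDiff_const.mul contDiff_hfun)

lemma contDiff_deriv {g : ℝ → ℝ} (hg : ContDiff ℝ (⊤ : ℕ∞) g) :
    ContDiff ℝ (⊤ : ℕ∞) (deriv g) :=
  (contDiff_infty_iff_deriv.mp hg).2

lemma diff_of_contDiff {g : ℝ → ℝ} (hg : ContDiff ℝ (⊤ : ℕ∞) g) :
    Differentiable ℝ g :=
  (contDiff_infty_iff_deriv.mp hg).1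

lemma contDiff_Dop {σ : ℝ} (hσ : σ = 1 ∨ σ = -1) {g : ℝ → ℝ}
    (hg : ContDiff ℝ (⊤ : ℕ∞) g) : ContDiff ℝ (⊤ : ℕ∞) (Dop σ g) :=
  (contDiff_deriv hg).div (contDiff_A σ) (fun y => (A_pos hσ y).ne')

lemma contDiff_Lop {σ : ℝ} (hσ : σ = 1 ∨ σ = -1) {g : ℝ → ℝ}
    (hg : ContDiff ℝ (⊤ : ℕ∞) g) : ContDiff ℝ (⊤ : ℕ∞) (Lop σ g) :=
  (((contDiff_B σ).div (contDiff_A σ) (fun y => (A_pos hσ y).ne')).neg).mul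
    (contDiff_deriv hg)

lemma contDiff_iter {σ : ℝ} (hσ : σ = 1 ∨ σ = -1) {g : ℝ → ℝ}
    (hg : ContDiff ℝ (⊤ : ℕ∞) g) (j : ℕ) : ContDiff ℝ (⊤ : ℕ∞) ((Dop σ)^[j] g) := by
  induction j with
  | zero => simpa using hg
  | succ j ih =>
    rw [Function.iterate_succ_apply']
    exact contDiff_Dop hσ ih

lemma hasDerivAt_A {σ : ℝ} (y : ℝ) :
    HasDerivAt (fun y => 1 + σ * deriv hfun y) (σ * deriv (deriv hfun) y) y :=
  (((diff_of_contDiff contDiff_derivh y).hasDerivAt).const_mul σ).const_add 1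

lemma hasDerivAt_B {σ : ℝ} (y : ℝ) :
    HasDerivAt (fun y => y + σ * hfun y) (1 + σ * deriv hfun y) y := by
  have := (hasDerivAt_id y).add ((hasDerivAt_hfun y).const_mul σ)
  rw [deriv_hfun]
  exact this

lemma comm1 {σ : ℝ} (hσ : σ = 1 ∨ σ = -1) {g : ℝ → ℝ}
    (hg : ContDiff ℝ (⊤ : ℕ∞) g) (y : ℝ) :
    Dop σ (Lop σ g) y - Lop σ (Dop σ g) y = -(Dop σ g y) := by
  set A : ℝ → ℝ := fun y => 1 + σ * deriv hfun y with hA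
  set B : ℝ → ℝ := fun y => y + σ * hfun y with hB
  have hAne : ∀ z, A z ≠ 0 := fun z => (A_pos hσ z).ne'
  set a' : ℝ := σ * deriv (deriv hfun) y with ha'
  have hAd : HasDerivAt A a' y := hasDerivAt_A y
  have hBd : HasDerivAt B (A y) y := hasDerivAt_B y
  have hg1 : HasDerivAt g (deriv g y) y := (diff_of_contDiff hg y).hasDerivAt
  have hg2 : HasDerivAt (deriv g) (deriv (deriv g) y) y :=
    (diff_of_contDiff (contDiff_deriv hg) y).hasDerivAt
  -- derivative of Lop σ g
  have hQ : HasDerivAt (fun z => B z / A z)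
      ((A y * A y - B y * a') / A y ^ 2) y := hBd.div hAd (hAne y)
  have hL : HasDerivAt (Lop σ g)
      (-((A y * A y - B y * a') / A y ^ 2) * deriv g y
        + -(B y / A y) * deriv (deriv g) y) y := hQ.neg.mul hg2
  -- derivative of Dop σ g
  have hD : HasDerivAt (Dop σ g)
      ((deriv (deriv g) y * A y - deriv g y * a') / A y ^ 2) y := hg2.div hAd (hAne y)
  have e1 : Dop σ (Lop σ g) y = (-((A y * A y - B y * a') / A y ^ 2) * deriv g y
        + -(B y / A y) * deriv (deriv g) y) / A y := by
    rw [Dop, hL.deriv]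
  have e2 : Lop σ (Dop σ g) y
      = -(B y / A y) * ((deriv (deriv g) y * A y - deriv g y * a') / A y ^ 2) := by
    rw [Lop, hD.deriv]
  rw [e1, e2, Dop]
  change _ = -(deriv g y / A y)
  have := hAne y
  field_simp
  ring

lemma commN {σ : ℝ} (hσ : σ = 1 ∨ σ = -1) {f : ℝ → ℝ}
    (hf : ContDiff ℝ (⊤ : ℕ∞) f) (j : ℕ) (y : ℝ) :
    (Dop σ)^[j] (Lop σ f) y - Lop σ ((Dop σ)^[j] f) y = -(j : ℝ) * (Dop σ)^[j] f y := by
  induction j generalizing y with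
  | zero => simp
  | succ j ih =>
    set g : ℝ → ℝ := (Dop σ)^[j] f with hgdef
    have hg : ContDiff ℝ (⊤ : ℕ∞) g := contDiff_iter hσ hf j
    have hfeq : (Dop σ)^[j] (Lop σ f) = fun z => Lop σ g z - (j : ℝ) * g z :=
      funext fun z => by have := ih z; linarith
    rw [Function.iterate_succ_apply', Function.iterate_succ_apply', hfeq, ← hgdef]
    have hLg : ContDiff ℝ (⊤ : ℕ∞) (Lop σ g) := contDiff_Lop hσ hg
    have hsplit : Dop σ (fun z => Lop σ g z - (j : ℝ) * g z) y
        = Dop σ (Lop σ g) y - (j : ℝ) * Dop σ g y := by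
      have h1 : HasDerivAt (fun z => Lop σ g z - (j : ℝ) * g z)
          (deriv (Lop σ g) y - (j : ℝ) * deriv g y) y :=
        ((diff_of_contDiff hLg y).hasDerivAt).sub
          (((diff_of_contDiff hg y).hasDerivAt).const_mul _)
      simp only [Dop, h1.deriv]
      ring
    rw [hsplit]
    have hc := comm1 hσ hg y
    push_cast
    linear_combination hc

end CommAux

theorem commutator_relation (R : ℝ) (hR : 0 < R) (σ : ℝ) (hσ : σ = 1 ∨ σ = -1)
    (f : ℝ → ℝ) (hf : ContDiff ℝ (⊤ : ℕ∞) f) :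
    (∀ y ∈ Set.Icc (-R) R,
      Dop σ (Lop σ f) y - Lop σ (Dop σ f) y = -(Dop σ f y)) ∧
    ∀ (j : ℕ), ∀ y ∈ Set.Icc (-R) R,
      (Dop σ)^[j] (Lop σ f) y - Lop σ ((Dop σ)^[j] f) y = -(j : ℝ) * (Dop σ)^[j] f y := by
  exact ⟨fun y _ => CommAux.comm1 hσ hf y, fun j y _ => CommAux.commN hσ hf j y⟩
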